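/- For any EG program Γ, the infinitary formula τ₂Γ is satisfied by exactly the same interpretations of the vocabulary of Γ as the conjunction of the universal closures of the formula representations of the constraints of Γ. -/

import Mathlib

namespace EG


/-! ### Relation symbols -/

inductive Rel : Type where
  | req | rne | rlt | rle | rgt | rge

/-- Evaluation of a relation symbol relative to a strict total order `lt`
on the domain (equality is genuine equality of domain elements). -/
def Rel.eval {α : Type} (lt : α → α → Prop) : Rel → α → α → Prop
  | .req, a, b => a = b
  | .rne, a, b => a ≠ b
  | .rlt, a, b => lt a b
  | .rle, a, b => lt a b ∨ a = b
  | .rgt, a, b => lt b a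
  | .rge, a, b => lt b a ∨ a = b

/-! ### Precomputed terms -/

/-- Precomputed terms over a type `C` of symbolic constants:
numerals, symbolic constants, `inf`, `sup`, and applications of a symbolic
constant to a tuple of precomputed terms. -/
inductive Pre (C : Type) : Type where
  | inf
  | sup
  | num (n : ℤ)
  | sym (c : C)
  | app (f : C) (args : List (Pre C))

/-- The assumed total order on precomputed terms: a strict total order with
`inf` least, `sup` greatest, in which numerals are ordered as the integers. -/
structure PreOrderOK {C : Type} (lt : Pre C → Pre C → Prop) : Prop where
  irrefl : ∀ a, ¬ lt a a
  trans : ∀ a b c, lt a b → lt b c → lt a c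
  total : ∀ a b, lt a b ∨ a = b ∨ lt b a
  inf_least : ∀ a, a ≠ Pre.inf → lt Pre.inf a
  sup_greatest : ∀ a, a ≠ Pre.sup → lt a Pre.sup
  num_iff : ∀ m n : ℤ, (lt (Pre.num m) (Pre.num n) ↔ m < n)

/-- Atoms `p(r)` where `r` is a tuple of precomputed terms. -/
abbrev EGAtom (C : Type) := C × List (Pre C)

/-- An interpretation is a set of atoms over precomputed terms. -/
abbrev Interp (C : Type) := Set (EGAtom C)

/-- Valuations: variables (natural numbers) ↦ precomputed terms. -/
abbrev Val (C : Type) := ℕ → Pre C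

/-- Simultaneously update a valuation on a list of variables by a list of values. -/
def updList {C : Type} : Val C → List ℕ → List (Pre C) → Val C
  | v, [], _ => v
  | v, _ :: _, [] => v
  | v, x :: xs, r :: rs => Function.update (updList v xs rs) x r

/-! ### Terms -/

/-- Terms over symbolic constants `C` and operation names `O`. -/
inductive Term (C O : Type) : Type where
  | num (n : ℤ)
  | sym (c : C)
  | var (x : ℕ)
  | inf
  | sup
  | app (f : C) (ts : List (Term C O))
  | op (o : O) (ts : List (Term C O))
  | interval (t₁ t₂ : Term C O)

mutual
/-- The list of variables occurring in a term. -/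
def Term.varList {C O : Type} : Term C O → List ℕ
  | .num _ => []
  | .sym _ => []
  | .var x => [x]
  | .inf => []
  | .sup => []
  | .app _ ts => Term.varListL ts
  | .op _ ts => Term.varListL ts
  | .interval t₁ t₂ => t₁.varList ++ t₂.varList

def Term.varListL {C O : Type} : List (Term C O) → List ℕ
  | [] => []
  | t :: ts => t.varList ++ Term.varListL ts
end

/-- A term (or tuple of terms, etc.) is ground if it contains no variables. -/
def Term.Ground {C O : Type} (t : Term C O) : Prop := t.varList = []

mutual
/-- The set of values of a term under a valuation `v` (for a ground term this
is the set `[t]` of its values, independent of `v`). `opFun` gives the partial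
integer function denoted by each operation name. -/
def Term.val {C O : Type} (opFun : O → List ℤ → Option ℤ) (v : Val C) :
    Term C O → Set (Pre C)
  | .num n => {Pre.num n}
  | .sym c => {Pre.sym c}
  | .var x => {v x}
  | .inf => {Pre.inf}
  | .sup => {Pre.sup}
  | .app f ts => {r | ∃ rs : List (Pre C), Term.vals opFun v ts rs ∧ r = Pre.app f rs}
  | .op o ts => {r | ∃ ks : List ℤ, Term.vals opFun v ts (ks.map Pre.num) ∧
      ∃ m : ℤ, opFun o ks = some m ∧ r = Pre.num m}
  | .interval t₁ t₂ => {r | ∃ k₁ k₂ m : ℤ, Pre.num k₁ ∈ Term.val opFun v t₁ ∧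
      Pre.num k₂ ∈ Term.val opFun v t₂ ∧ k₁ ≤ m ∧ m ≤ k₂ ∧ r = Pre.num m}

/-- `Term.vals opFun v ts rs` : the tuple `rs` of precomputed terms is a tuple of
values of the tuple `ts` of terms (componentwise). -/
def Term.vals {C O : Type} (opFun : O → List ℤ → Option ℤ) (v : Val C) :
    List (Term C O) → List (Pre C) → Prop
  | [], rs => rs = []
  | t :: ts, rs => ∃ r rs', rs = r :: rs' ∧ r ∈ Term.val opFun v t ∧ Term.vals opFun v ts rs'
end

mutual
/-- Embedding of precomputed terms into terms. -/
def Pre.toTerm {C O : Type} : Pre C → Term C O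
  | .inf => .inf
  | .sup => .sup
  | .num n => .num n
  | .sym c => .sym c
  | .app f rs => .app f (Pre.toTermL rs)

def Pre.toTermL {C O : Type} : List (Pre C) → List (Term C O)
  | [] => []
  | r :: rs => Pre.toTerm r :: Pre.toTermL rs
end


/-! ### Formulas with aggregates -/

mutual
/-- Arguments of the extended (aggregate) language. -/
inductive AArg (C O A : Type) : Type where
  | num (n : ℤ)
  | sym (c : C)
  | var (x : ℕ)
  | inf
  | sup
  | app (f : C) (args : List (AArg C O A))
  | agg (a : A) (xs : List ℕ) (F : AFml C O A)

/-- Formulas of the extended (aggregate) first-order language over the domain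
of precomputed terms. -/
inductive AFml (C O A : Type) : Type where
  | atom (p : C) (args : List (AArg C O A))
  | cmp (rel : Rel) (a₁ a₂ : AArg C O A)
  | mem (a : AArg C O A) (t : Term C O)
  | bot
  | impl (F G : AFml C O A)
  | all (x : ℕ) (F : AFml C O A)
end

section Sem
variable {C O A : Type}
variable (opFun : O → List ℤ → Option ℤ)
variable (aggFun : A → Set (List (Pre C)) → Pre C)
variable (lt : Pre C → Pre C → Prop)

mutual
/-- The precomputed term denoted by an argument (joint recursion with `AFml.sat`). -/
def AArg.eval (I : Interp C) : Val C → AArg C O A → Pre C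
  | _, .num n => Pre.num n
  | _, .sym c => Pre.sym c
  | v, .var x => v x
  | _, .inf => Pre.inf
  | _, .sup => Pre.sup
  | v, .app f args => Pre.app f (AArg.evalL I v args)
  | v, .agg a xs F => aggFun a
      {rs : List (Pre C) | rs.length = xs.length ∧ AFml.sat I (updList v xs rs) F}

def AArg.evalL (I : Interp C) : Val C → List (AArg C O A) → List (Pre C)
  | _, [] => []
  | v, a :: as => AArg.eval I v a :: AArg.evalL I v as

/-- Satisfaction of a formula by an interpretation `I` under a valuation `v`. -/
def AFml.sat (I : Interp C) : Val C → AFml C O A → Prop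
  | v, .atom p args => (p, AArg.evalL I v args) ∈ I
  | v, .cmp rel a₁ a₂ => Rel.eval lt rel (AArg.eval I v a₁) (AArg.eval I v a₂)
  | v, .mem a t => AArg.eval I v a ∈ Term.val opFun v t
  | _, .bot => False
  | v, .impl F G => AFml.sat I v F → AFml.sat I v G
  | v, .all x F => ∀ r : Pre C, AFml.sat I (Function.update v x r) F
end

end Sem
/-! ### Infinitary propositional formulas -/

/-- Infinitary propositional formulas over a type `α` of atoms: atoms, `⊥`,
conjunctions and disjunctions of arbitrary families of formulas, implication. -/
inductive IForm (α : Type) : Type 1 where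
  | atom (a : α)
  | bot
  | conj (ι : Type) (f : ι → IForm α)
  | disj (ι : Type) (f : ι → IForm α)
  | impl (F G : IForm α)

namespace IForm

variable {α : Type}

/-- `⊤` as the empty conjunction. -/
def top : IForm α := conj Empty (fun e => e.elim)
def neg (F : IForm α) : IForm α := impl F bot
def and (F G : IForm α) : IForm α := conj Bool (fun b => cond b F G)
def or (F G : IForm α) : IForm α := disj Bool (fun b => cond b F G)
def conjList (l : List (IForm α)) : IForm α := conj (Fin l.length) (fun i => l.get i)

/-- Classical satisfaction of infinitary formulas. -/
def sat (I : Set α) : IForm α → Prop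
  | atom a => a ∈ I
  | bot => False
  | conj _ f => ∀ i, sat I (f i)
  | disj _ f => ∃ i, sat I (f i)
  | impl F G => sat I F → sat I G

open Classical in
/-- The Ferraris reduct of an infinitary formula relative to an interpretation:
every (maximal) subformula not satisfied by `I` is replaced by `⊥`. -/
noncomputable def reduct (I : Set α) : IForm α → IForm α
  | atom a => if a ∈ I then atom a else bot
  | bot => bot
  | conj ι f => conj ι (fun i => reduct I (f i))
  | disj ι f => disj ι (fun i => reduct I (f i))
  | impl F G => if sat I (impl F G) then impl (reduct I F) (reduct I G) else bot

/-- `I` is a stable model of `F` (Ferraris semantics for infinitary formulas):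
`I` is a minimal model of the reduct `F^I`. -/
def stable (I : Set α) (F : IForm α) : Prop :=
  sat I (reduct I F) ∧ ∀ J : Set α, J ⊆ I → sat J (reduct I F) → J = I

/-- Satisfaction in the infinitary logic of here-and-there `HT^∞`, for an
HT-interpretation given by `J ⊆ I` ("here" `J`, "there" `I`). -/
def satHT (J I : Set α) : IForm α → Prop
  | atom a => a ∈ J
  | bot => False
  | conj _ f => ∀ i, satHT J I (f i)
  | disj _ f => ∃ i, satHT J I (f i)
  | impl F G => (satHT J I F → satHT J I G) ∧ (sat I F → sat I G)

/-- Strong equivalence of infinitary formulas, i.e. equivalence in `HT^∞`. -/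
def HTEquiv (F G : IForm α) : Prop :=
  ∀ J I : Set α, J ⊆ I → (satHT J I F ↔ satHT J I G) ∧ (sat I F ↔ sat I G)

mutual
/-- Positive nonnegated atoms of an infinitary formula. -/
def Pnn : IForm α → Set α
  | atom a => {a}
  | bot => ∅
  | conj _ f => ⋃ i, Pnn (f i)
  | disj _ f => ⋃ i, Pnn (f i)
  | impl _ bot => ∅
  | impl G H => Nnn G ∪ Pnn H

/-- Negative nonnegated atoms of an infinitary formula. -/
def Nnn : IForm α → Set α
  | atom _ => ∅
  | bot => ∅
  | conj _ f => ⋃ i, Nnn (f i)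
  | disj _ f => ⋃ i, Nnn (f i)
  | impl _ bot => ∅
  | impl G H => Pnn G ∪ Nnn H
end

end IForm

/-! ### Infinitary programs -/

/-- An infinitary rule `F → A`. -/
structure IRule (α : Type) : Type 1 where
  body : IForm α
  head : α

/-- An infinitary program: a conjunction (represented as a set) of infinitary rules. -/
abbrev IProg (α : Type) := Set (IRule α)

def IRule.toForm {α : Type} (r : IRule α) : IForm α := .impl r.body (.atom r.head)

namespace IProg
variable {α : Type}

/-- `I` satisfies the program (i.e., the conjunction of its rules). -/
def sat (I : Set α) (P : IProg α) : Prop := ∀ r ∈ P, IForm.sat I r.toForm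

/-- `I` is a stable model of the program, i.e., of the conjunction of its rules:
`I` is a minimal model of the reduct of that conjunction. -/
def stable (I : Set α) (P : IProg α) : Prop :=
  (∀ r ∈ P, IForm.sat I (IForm.reduct I r.toForm)) ∧
  ∀ J : Set α, J ⊆ I → (∀ r ∈ P, IForm.sat J (IForm.reduct I r.toForm)) → J = I

/-- `I` is supported by the program. -/
def supported (I : Set α) (P : IProg α) : Prop :=
  ∀ a ∈ I, ∃ r ∈ P, r.head = a ∧ IForm.sat I r.body

/-- `I` satisfies the completion of `P`, with signature (set of atoms) `S`:
the conjunction over all atoms `A ∈ S` of `A ↔ ⋁ (P|_A)`. -/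
def satCompletionOn (S : Set α) (I : Set α) (P : IProg α) : Prop :=
  ∀ a ∈ S, (a ∈ I ↔ ∃ r ∈ P, r.head = a ∧ IForm.sat I r.body)

/-- `B` is a parent of `A` relative to `P` and `I`. -/
def parent (P : IProg α) (I : Set α) (B A : α) : Prop :=
  A ∈ I ∧ B ∈ I ∧ ∃ r ∈ P, r.head = A ∧ IForm.sat I r.body ∧ B ∈ IForm.Pnn r.body

/-- `P` is tight on `I`: there is no infinite sequence of elements of `I` in
which each element is followed by one of its parents. -/
def tightOn (P : IProg α) (I : Set α) : Prop :=
  ¬ ∃ f : ℕ → α, (∀ i, f i ∈ I) ∧ ∀ i, parent P I (f (i + 1)) (f i)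

end IProg
/-! ### Programs -/

/-- A literal: an atom `p(t₁,…,tₙ)` (`pos = true`) or such an atom preceded
by `not` (`pos = false`). -/
structure Lit (C O : Type) : Type where
  pos : Bool
  pred : C
  args : List (Term C O)

/-- A comparison `t₁ ≺ t₂`. -/
structure Comp (C O : Type) : Type where
  rel : Rel
  lhs : Term C O
  rhs : Term C O

/-- An element of the condition of an aggregate expression: a literal or comparison. -/
abbrev CondElem (C O : Type) := Lit C O ⊕ Comp C O

def Lit.varList {C O : Type} (l : Lit C O) : List ℕ := Term.varListL l.args
def Comp.varList {C O : Type} (c : Comp C O) : List ℕ := c.lhs.varList ++ c.rhs.varList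
def CondElem.varList {C O : Type} : CondElem C O → List ℕ :=
  Sum.elim Lit.varList Comp.varList

/-- An aggregate expression `α{t : C} ≺ s`, where `s` is a variable or a
precomputed term. -/
structure AggExpr (C O A : Type) : Type where
  name : A
  ts : List (Term C O)
  cond : List (CondElem C O)
  rel : Rel
  bound : ℕ ⊕ Pre C

def AggExpr.lhsVarList {C O A : Type} (E : AggExpr C O A) : List ℕ :=
  Term.varListL E.ts ++ E.cond.flatMap CondElem.varList

def boundVarList {C : Type} : ℕ ⊕ Pre C → List ℕ
  | .inl x => [x]
  | .inr _ => []

def AggExpr.varList {C O A : Type} (E : AggExpr C O A) : List ℕ :=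
  E.lhsVarList ++ boundVarList E.bound

/-- An aggregate expression is closed if its bound `s` is ground
(i.e., a precomputed term). -/
def AggExpr.ClosedBound {C O A : Type} (E : AggExpr C O A) : Prop :=
  ∃ r : Pre C, E.bound = Sum.inr r

/-- A conjunctive term of a rule body. -/
inductive BElem (C O A : Type) : Type where
  | lit (l : Lit C O)
  | comp (c : Comp C O)
  | agg (E : AggExpr C O A)

def BElem.varList {C O A : Type} : BElem C O A → List ℕ
  | .lit l => l.varList
  | .comp c => c.varList
  | .agg E => E.varList

/-- A body element suitable for the translation `τ`: a ground literal,
a ground comparison, or a closed aggregate expression. -/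
def BElem.ClosedC {C O A : Type} : BElem C O A → Prop
  | .lit l => l.varList = []
  | .comp c => c.varList = []
  | .agg E => E.ClosedBound

/-- The head of a rule. -/
inductive Head (C O : Type) : Type where
  | basic (p : C) (ts : List (Term C O))
  | choice (p : C) (ts : List (Term C O))
  | empty

def Head.varList {C O : Type} : Head C O → List ℕ
  | .basic _ ts => Term.varListL ts
  | .choice _ ts => Term.varListL ts
  | .empty => []

/-- A rule `Head ← Body`. -/
structure Rule (C O A : Type) : Type where
  head : Head C O
  body : List (BElem C O A)

def Rule.varList {C O A : Type} (R : Rule C O A) : List ℕ :=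
  R.head.varList ++ R.body.flatMap BElem.varList

/-- The variables with an occurrence in the rule outside the left-hand sides
`α{t : C}` of aggregate expressions (head, literal and comparison conjuncts,
and bounds of aggregate expressions); these are the global variables. -/
def Rule.globalList {C O A : Type} (R : Rule C O A) : List ℕ :=
  (R.head.varList ++ R.body.flatMap (fun b =>
    match b with
    | .lit l => l.varList
    | .comp c => c.varList
    | .agg E => boundVarList E.bound)).dedup

/-- The local variables of a rule: those occurring in the rule, all of whose
occurrences are inside left-hand sides of aggregate expressions of its body. -/
def Rule.localList {C O A : Type} (R : Rule C O A) : List ℕ :=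
  ((R.body.flatMap (fun b =>
    match b with
    | .agg E => E.lhsVarList
    | _ => [])).dedup).filter (fun x => x ∉ R.globalList)

/-- A rule is closed if all its variables are local. -/
def Rule.Closed {C O A : Type} (R : Rule C O A) : Prop := R.globalList = []

/-! ### Predicate symbol occurrences, vocabulary, dependency graph -/

def Lit.hasPred {C O : Type} (p : C) (n : ℕ) (l : Lit C O) : Prop :=
  l.pred = p ∧ l.args.length = n

def CondElem.hasPred {C O : Type} (p : C) (n : ℕ) : CondElem C O → Prop
  | .inl l => l.hasPred p n
  | .inr _ => False

def AggExpr.hasPred {C O A : Type} (p : C) (n : ℕ) (E : AggExpr C O A) : Prop :=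
  ∃ ce ∈ E.cond, CondElem.hasPred p n ce

/-- The predicate symbol `p/n` occurs in a body element. -/
def BElem.hasPred {C O A : Type} (p : C) (n : ℕ) : BElem C O A → Prop
  | .lit l => l.hasPred p n
  | .comp _ => False
  | .agg E => E.hasPred p n

/-- The predicate symbol `p/n` occurs in a positive literal or in an aggregate
expression (condition (ii′)). -/
def BElem.hasPosOrAggPred {C O A : Type} (p : C) (n : ℕ) : BElem C O A → Prop
  | .lit l => l.pos = true ∧ l.hasPred p n
  | .comp _ => False
  | .agg E => E.hasPred p n

def Head.hasPred {C O : Type} (p : C) (n : ℕ) : Head C O → Prop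
  | .basic q ts => q = p ∧ ts.length = n
  | .choice q ts => q = p ∧ ts.length = n
  | .empty => False

/-- The predicate symbol `p/n` occurs in the rule `R`. -/
def Rule.hasPredSym {C O A : Type} (p : C) (n : ℕ) (R : Rule C O A) : Prop :=
  R.head.hasPred p n ∨ ∃ e ∈ R.body, BElem.hasPred p n e

/-- The vocabulary of a program: all atoms `p(r)` with `r` a tuple of `n`
precomputed terms and `p/n` occurring in the program. -/
def vocab {C O A : Type} (Γ : Set (Rule C O A)) : Set (EGAtom C) :=
  {a | ∃ R ∈ Γ, Rule.hasPredSym a.1 a.2.length R}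

/-- The edge relation of the dependency graph `G_Γ` on predicate symbols. -/
def DepEdge {C O A : Type} (Γ : Set (Rule C O A)) (q p : C × ℕ) : Prop :=
  ∃ R ∈ Γ, R.head.hasPred q.1 q.2 ∧ ∃ e ∈ R.body, BElem.hasPosOrAggPred p.1 p.2 e

/-- A program is tight if its dependency graph is acyclic. -/
def EGTight {C O A : Type} (Γ : Set (Rule C O A)) : Prop :=
  ∀ s : C × ℕ, ¬ Relation.TransGen (DepEdge Γ) s s


/-! ### Embeddings and aggregate-freeness -/

mutual
/-- Embedding of precomputed terms into arguments of the extended language. -/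
def Pre.toAArg {C O A : Type} : Pre C → AArg C O A
  | .inf => .inf
  | .sup => .sup
  | .num n => .num n
  | .sym c => .sym c
  | .app f rs => .app f (Pre.toAArgL rs)

def Pre.toAArgL {C O A : Type} : List (Pre C) → List (AArg C O A)
  | [] => []
  | r :: rs => Pre.toAArg r :: Pre.toAArgL rs
end

mutual
/-- The number of occurrences of aggregate names in an argument;
an argument is aggregate-free iff this is `0`. -/
def AArg.countAgg {C O A : Type} : AArg C O A → ℕ
  | .num _ => 0
  | .sym _ => 0
  | .var _ => 0
  | .inf => 0
  | .sup => 0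
  | .app _ args => AArg.countAggL args
  | .agg _ _ F => F.countAgg + 1

def AArg.countAggL {C O A : Type} : List (AArg C O A) → ℕ
  | [] => 0
  | a :: as => a.countAgg + AArg.countAggL as

def AFml.countAgg {C O A : Type} : AFml C O A → ℕ
  | .atom _ args => AArg.countAggL args
  | .cmp _ a₁ a₂ => a₁.countAgg + a₂.countAgg
  | .mem a _ => a.countAgg
  | .bot => 0
  | .impl F G => F.countAgg + G.countAgg
  | .all _ F => F.countAgg
end

/-- An argument contains no aggregate names. -/
def AArg.AggFree {C O A : Type} (a : AArg C O A) : Prop := a.countAgg = 0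

mutual
/-- An aggregate-free argument, viewed as a term (the `agg` case is junk and
is never relevant for aggregate-free arguments). -/
def AArg.toTerm {C O A : Type} : AArg C O A → Term C O
  | .num n => .num n
  | .sym c => .sym c
  | .var x => .var x
  | .inf => .inf
  | .sup => .sup
  | .app f args => .app f (AArg.toTermL args)
  | .agg _ _ _ => .inf

def AArg.toTermL {C O A : Type} : List (AArg C O A) → List (Term C O)
  | [] => []
  | a :: as => a.toTerm :: AArg.toTermL as
end

/-! ### Abbreviated connectives of the extended first-order language -/

namespace AFml
variable {C O A : Type}

def negF (F : AFml C O A) : AFml C O A := .impl F .bot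
def topF : AFml C O A := negF .bot
def andF (F G : AFml C O A) : AFml C O A := .impl (.impl F (.impl G .bot)) .bot
def orF (F G : AFml C O A) : AFml C O A := .impl (negF F) G
def iffF (F G : AFml C O A) : AFml C O A := andF (.impl F G) (.impl G F)
def exF (x : ℕ) (F : AFml C O A) : AFml C O A := negF (.all x (negF F))
def andList (l : List (AFml C O A)) : AFml C O A := l.foldr andF topF
def orList (l : List (AFml C O A)) : AFml C O A := l.foldr orF .bot
def exList (xs : List ℕ) (F : AFml C O A) : AFml C O A := xs.foldr exF F
def allList (xs : List ℕ) (F : AFml C O A) : AFml C O A := xs.foldr .all F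

end AFml

/-! ### The translation φ (formula representations) -/

/-- A variable index strictly greater than every element of `l`
(used to pick new/fresh variables). -/
def freshVar (l : List ℕ) : ℕ := l.foldr max 0 + 1

/-- The bound `s` of an aggregate expression, as a term. -/
def boundTerm {C O : Type} : ℕ ⊕ Pre C → Term C O
  | .inl x => .var x
  | .inr r => r.toTerm

section Phi
variable {C O A : Type}

/-- `φ` of a literal: `∃X(X ∈ t ∧ p(X))`, resp. `∃X(X ∈ t ∧ ¬p(X))`,
with `X` a tuple of new variables. -/
def phiLit (l : Lit C O) : AFml C O A :=
  let n := freshVar l.varList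
  let ws := (List.range l.args.length).map (· + n)
  AFml.exList ws (AFml.andF
    (AFml.andList ((ws.zip l.args).map (fun q => AFml.mem (AArg.var q.1) q.2)))
    (if l.pos then AFml.atom l.pred (ws.map AArg.var)
     else AFml.negF (AFml.atom l.pred (ws.map AArg.var))))

/-- `φ` of a comparison: `∃X₁X₂(X₁ ∈ t₁ ∧ X₂ ∈ t₂ ∧ X₁ ≺ X₂)`. -/
def phiComp (c : Comp C O) : AFml C O A :=
  let n := freshVar c.varList
  AFml.exF n (AFml.exF (n + 1) (AFml.andF (AFml.mem (AArg.var n) c.lhs)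
    (AFml.andF (AFml.mem (AArg.var (n + 1)) c.rhs)
      (AFml.cmp c.rel (AArg.var n) (AArg.var (n + 1))))))

def phiCondElem : CondElem C O → AFml C O A :=
  Sum.elim phiLit phiComp

/-- `φ` of a conjunction of literals and comparisons. -/
def phiCond (cond : List (CondElem C O)) : AFml C O A :=
  AFml.andList (cond.map phiCondElem)

/-- `φ^X` of an aggregate expression `α{t : C} ≺ s` (with `X = xs` the
variables treated as local):
`∃Y(α{Z | ∃X(Z ∈ t ∧ φC)} ≺ Y ∧ Y ∈ s)`, with `Z`, `Y` new variables. -/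
def phiAgg (xs : List ℕ) (E : AggExpr C O A) : AFml C O A :=
  let n := freshVar (xs ++ E.varList)
  let zs := (List.range E.ts.length).map (· + (n + 1))
  AFml.exF n (AFml.andF
    (AFml.cmp E.rel
      (AArg.agg E.name zs
        (AFml.exList xs (AFml.andF
          (AFml.andList ((zs.zip E.ts).map (fun q => AFml.mem (AArg.var q.1) q.2)))
          (phiCond E.cond))))
      (AArg.var n))
    (AFml.mem (AArg.var n) (boundTerm E.bound)))

/-- `φ^X` of a body element, where `xs` is the list of variables treated as local. -/
def phiBElem (xs : List ℕ) : BElem C O A → AFml C O A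
  | .lit l => phiLit l
  | .comp c => phiComp c
  | .agg E => phiAgg xs E

/-- `φ^X` of a body (a conjunction of literals, comparisons and aggregate
expressions), where `xs` is the list of variables treated as local. -/
def phiBody (xs : List ℕ) (b : List (BElem C O A)) : AFml C O A :=
  AFml.andList (b.map (phiBElem xs))

/-- The formula representation of a constraint `← Body`: `¬ φ^X(Body)`,
where `X` is the list of local variables of the constraint. -/
def phiConstraintRep (R : Rule C O A) : AFml C O A :=
  AFml.negF (phiBody R.localList R.body)

/-- `V ∈ t` for a tuple `V` of variables and a tuple `t` of terms. -/
def memConj (Vs : List ℕ) (ts : List (Term C O)) : AFml C O A :=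
  AFml.andList ((Vs.zip ts).map (fun q => AFml.mem (AArg.var q.1) q.2))

/-- The antecedent `Fᵢ` of the formula representation `Fᵢ → p(V)` of a basic or
choice rule, where `Vs` is the chosen tuple `V` of new variables:
for a basic rule `V ∈ t ∧ φ^X(Body)`, for a choice rule
`V ∈ t ∧ φ^X(Body) ∧ p(V)`, with `X` the local variables of the rule. -/
def ruleAnte (Vs : List ℕ) (R : Rule C O A) : AFml C O A :=
  match R.head with
  | .basic _ ts => AFml.andF (memConj Vs ts) (phiBody R.localList R.body)
  | .choice p ts => AFml.andF (memConj Vs ts)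
      (AFml.andF (phiBody R.localList R.body) (AFml.atom p (Vs.map AArg.var)))
  | .empty => AFml.bot

/-- Does `R` belong to the definition of `p/n` (a basic or choice rule whose
head is of the form `p(t₁,…,tₙ)` or `{p(t₁,…,tₙ)}`)? -/
def definesB [DecidableEq C] (p : C) (n : ℕ) (R : Rule C O A) : Bool :=
  match R.head with
  | .basic q ts => decide (q = p ∧ ts.length = n)
  | .choice q ts => decide (q = p ∧ ts.length = n)
  | .empty => false

/-- The completed definition of the predicate symbol `p/n` in the finite
program `Γ`: `∀V(p(V) ↔ ⋁ᵢ ∃Uᵢ Fᵢ)`, where the `Fᵢ` come from the formula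
representations of the rules defining `p/n`, `V` is a tuple of new variables
chosen in the same way for all `i`, and `Uᵢ` is the list of free variables of
`Fᵢ` not in `V` (i.e., the global variables of the corresponding rule). -/
def completedDef [DecidableEq C] (Γ : List (Rule C O A)) (p : C) (n : ℕ) : AFml C O A :=
  let base := freshVar (Γ.flatMap Rule.varList)
  let Vs := (List.range n).map (· + base)
  AFml.allList Vs (AFml.iffF (AFml.atom p (Vs.map AArg.var))
    (AFml.orList ((Γ.filter (definesB p n)).map
      (fun R => AFml.exList R.globalList (ruleAnte Vs R)))))

end Phi

/-! ### The translation τ (grounding into infinitary formulas) -/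

section Tau
variable {C O A : Type}
variable (opFun : O → List ℤ → Option ℤ)
variable (aggFun : A → Set (List (Pre C)) → Pre C)
variable (lt : Pre C → Pre C → Prop)

/-- `τ` of a (ground instance of a) literal: `⋁_{r ∈ [t]} p(r)`, resp.
`⋁_{r ∈ [t]} ¬p(r)`; variables are evaluated by the valuation `v`. -/
def tauLit (v : Val C) (l : Lit C O) : IForm (EGAtom C) :=
  if l.pos then
    .disj {rs : List (Pre C) // Term.vals opFun v l.args rs}
      (fun rs => .atom (l.pred, rs.val))
  else
    .disj {rs : List (Pre C) // Term.vals opFun v l.args rs}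
      (fun rs => .neg (.atom (l.pred, rs.val)))

open Classical in
/-- `τ` of a (ground instance of a) comparison: `⊤` if the relation holds
between some values of the two terms, `⊥` otherwise. -/
noncomputable def tauComp (v : Val C) (c : Comp C O) : IForm (EGAtom C) :=
  if ∃ r₁ ∈ Term.val opFun v c.lhs, ∃ r₂ ∈ Term.val opFun v c.rhs,
      Rel.eval lt c.rel r₁ r₂
  then .top else .bot

noncomputable def tauCondElem (v : Val C) : CondElem C O → IForm (EGAtom C)
  | .inl l => tauLit opFun v l
  | .inr c => tauComp opFun lt v c

/-- `τ` of a conjunction of (ground instances of) literals and comparisons. -/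
noncomputable def tauCond (v : Val C) (cond : List (CondElem C O)) : IForm (EGAtom C) :=
  IForm.conjList (cond.map (tauCondElem opFun lt v))

/-- The value of the bound `s` of an aggregate expression under a valuation. -/
def boundVal (v : Val C) : ℕ ⊕ Pre C → Pre C
  | .inl x => v x
  | .inr r => r

/-- Tuples of precomputed terms matching the variable list `xs`. -/
def AggTuple (C : Type) (xs : List ℕ) : Type := {rs : List (Pre C) // rs.length = xs.length}

/-- `Δ` justifies the aggregate expression `E` (relative to the valuation `v`
and the list `xs` of its variables): `≺` holds between `α̂([Δ])` and `s`,
where `[Δ]` is the union of the value sets of the instantiated tuples `t`. -/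
def Justifies (v : Val C) (xs : List ℕ) (E : AggExpr C O A)
    (Δ : Set (AggTuple C xs)) : Prop :=
  Rel.eval lt E.rel
    (aggFun E.name
      {q | ∃ rs ∈ Δ, Term.vals opFun (updList v xs rs.val) E.ts q})
    (boundVal v E.bound)

/-- `τ` of a closed aggregate expression `E`, relative to the list `xs` of its
variables: the conjunction, over all subsets `Δ` of the set `A` of tuples of
precomputed terms matching `xs` that do not justify `E`, of the implications
`(⋀_{r∈Δ} τ(C^X_r)) → (⋁_{r∈A∖Δ} τ(C^X_r))`. -/
noncomputable def tauAgg (v : Val C) (xs : List ℕ) (E : AggExpr C O A) :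
    IForm (EGAtom C) :=
  .conj {Δ : Set (AggTuple C xs) // ¬ Justifies opFun aggFun lt v xs E Δ}
    (fun Δ => .impl
      (.conj {rs : AggTuple C xs // rs ∈ Δ.val}
        (fun rs => tauCond opFun lt (updList v xs rs.val.val) E.cond))
      (.disj {rs : AggTuple C xs // rs ∉ Δ.val}
        (fun rs => tauCond opFun lt (updList v xs rs.val.val) E.cond)))

/-- `τ` of a closed aggregate expression, with `X` the list of variables
occurring in it. -/
noncomputable def tauAggE (v : Val C) (E : AggExpr C O A) : IForm (EGAtom C) :=
  tauAgg opFun aggFun lt v (E.varList.dedup) E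

/-- `τ` of a body element of (an instance of) a rule whose list of local
variables is `loc`; in the instance, the variables occurring in an aggregate
expression `E` are the variables of `E` that are local in the rule. -/
noncomputable def tauBElem (v : Val C) (loc : List ℕ) : BElem C O A → IForm (EGAtom C)
  | .lit l => tauLit opFun v l
  | .comp c => tauComp opFun lt v c
  | .agg E => tauAgg opFun aggFun lt v (E.varList.dedup.filter (· ∈ loc)) E

/-- `τ` of the body of (an instance of) a rule with local variable list `loc`. -/
noncomputable def tauBody (v : Val C) (loc : List ℕ) (b : List (BElem C O A)) :
    IForm (EGAtom C) :=
  IForm.conjList (b.map (tauBElem opFun aggFun lt v loc))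

/-- `τ` of (an instance, given by the valuation `v`, of) a rule. -/
noncomputable def tauRule (v : Val C) (R : Rule C O A) : IForm (EGAtom C) :=
  match R.head with
  | .basic p ts => .impl (tauBody opFun aggFun lt v R.localList R.body)
      (.conj {rs : List (Pre C) // Term.vals opFun v ts rs}
        (fun rs => .atom (p, rs.val)))
  | .choice p ts => .impl (tauBody opFun aggFun lt v R.localList R.body)
      (.conj {rs : List (Pre C) // Term.vals opFun v ts rs}
        (fun rs => .or (.atom (p, rs.val)) (.neg (.atom (p, rs.val)))))
  | .empty => .neg (tauBody opFun aggFun lt v R.localList R.body)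

/-- `τΓ`: the conjunction of `τR` over all instances `R` of the rules of `Γ`
(instances given by valuations of the global variables). -/
noncomputable def tauProg (Γ : Set (Rule C O A)) : IForm (EGAtom C) :=
  .conj ({R : Rule C O A // R ∈ Γ} × Val C)
    (fun z => tauRule opFun aggFun lt z.2 z.1.val)

/-- Stable models of an EG program: stable models of `τΓ`. -/
noncomputable def EGStable (I : Interp C) (Γ : Set (Rule C O A)) : Prop :=
  IForm.stable I (tauProg opFun aggFun lt Γ)

/-- The infinitary program `τ₁Γ`: the rules `τ(Body) → p(r)` for all instances
of basic rules of `Γ` and all `r ∈ [t]`, together with the rules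
`τ(Body) ∧ ¬¬p(r) → p(r)` for all instances of choice rules and all `r ∈ [t]`. -/
noncomputable def tau1 (Γ : Set (Rule C O A)) : IProg (EGAtom C) :=
  {ir | ∃ R ∈ Γ, ∃ v : Val C,
    (∃ p ts rs, R.head = Head.basic p ts ∧ Term.vals opFun v ts rs ∧
      ir = ⟨tauBody opFun aggFun lt v R.localList R.body, (p, rs)⟩) ∨
    (∃ p ts rs, R.head = Head.choice p ts ∧ Term.vals opFun v ts rs ∧
      ir = ⟨IForm.and (tauBody opFun aggFun lt v R.localList R.body)
              (IForm.neg (IForm.neg (IForm.atom (p, rs)))), (p, rs)⟩)}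

/-- The infinitary formula `τ₂Γ`: the conjunction of `¬τ(C)` over all
instances `← C` of the constraints of `Γ`. -/
noncomputable def tau2 (Γ : Set (Rule C O A)) : IForm (EGAtom C) :=
  .conj ({R : Rule C O A // R ∈ Γ ∧ R.head = Head.empty} × Val C)
    (fun z => .neg (tauBody opFun aggFun lt z.2 z.1.val.localList z.1.val.body))

/-- `τ` of a closed conjunction of ground literals, ground comparisons and
closed aggregate expressions (each aggregate expression translated relative
to the list of its own variables). -/
noncomputable def tauBElemC (v : Val C) : BElem C O A → IForm (EGAtom C)
  | .lit l => tauLit opFun v l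
  | .comp c => tauComp opFun lt v c
  | .agg E => tauAggE opFun aggFun lt v E

noncomputable def tauBodyC (v : Val C) (b : List (BElem C O A)) : IForm (EGAtom C) :=
  IForm.conjList (b.map (tauBElemC opFun aggFun lt v))

end Tau

/-! ### Completion of an EG program -/

section Completion
variable {C O A : Type}
variable (opFun : O → List ℤ → Option ℤ)
variable (aggFun : A → Set (List (Pre C)) → Pre C)
variable (lt : Pre C → Pre C → Prop)

/-- `I` satisfies the completion of the finite program `Γ`: the completed
definitions of all predicate symbols occurring in `Γ` together with the
universal closures of the formula representations of all constraints of `Γ`. -/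
def SatCompletion [DecidableEq C] (Γ : List (Rule C O A)) (I : Interp C) : Prop :=
  (∀ (p : C) (n : ℕ), (∃ R ∈ Γ, Rule.hasPredSym p n R) →
    ∀ v : Val C, AFml.sat opFun aggFun lt I v (completedDef Γ p n)) ∧
  (∀ R ∈ Γ, R.head = Head.empty →
    ∀ v : Val C, AFml.sat opFun aggFun lt I v (phiConstraintRep R))

end Completion

section Lemma6Aux
variable {C O A : Type}
variable (opFun : O → List ℤ → Option ℤ)
variable (aggFun : A → Set (List (Pre C)) → Pre C)
variable (lt : Pre C → Pre C → Prop)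

lemma lt_freshVar {l : List ℕ} {x : ℕ} (h : x ∈ l) : x < freshVar l := by
  unfold freshVar
  have : x ≤ l.foldr max 0 := by
    induction l with
    | nil => cases h
    | cons a l ih =>
      rcases List.mem_cons.mp h with h | h
      · subst h; exact le_max_left _ _
      · exact le_trans (ih h) (le_max_right _ _)
  omega

lemma updList_not_mem : ∀ (xs : List ℕ) (rs : List (Pre C)) (v : Val C) {x : ℕ},
    x ∉ xs → updList v xs rs x = v x
  | [], _, _, _, _ => rfl
  | _ :: _, [], _, _, _ => rfl
  | y :: ys, r :: rs, v, x, h => by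
    have hxy : x ≠ y := fun hx => h (hx ▸ List.mem_cons_self)
    simp only [updList, Function.update_of_ne hxy]
    exact updList_not_mem ys rs v (fun hx => h (List.mem_cons_of_mem _ hx))

lemma updList_zip : ∀ (xs : List ℕ) (rs : List (Pre C)) (v : Val C),
    xs.Nodup → rs.length = xs.length →
    ∀ p ∈ xs.zip rs, updList v xs rs p.1 = p.2
  | [], _, _, _, _, p, hp => by simp at hp
  | y :: ys, [], _, _, hlen, _, _ => by simp at hlen
  | y :: ys, r :: rs, v, hnd, hlen, p, hp => by
    rcases List.mem_cons.mp hp with h | h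
    · subst h
      simp [updList]
    · have hx : p.1 ∈ ys := (List.of_mem_zip h).1
      have hxy : p.1 ≠ y := fun hxy => (List.nodup_cons.mp hnd).1 (hxy ▸ hx)
      simp only [updList, Function.update_of_ne hxy]
      exact updList_zip ys rs v (List.nodup_cons.mp hnd).2 (by simpa using hlen) p h

lemma map_updList : ∀ (xs : List ℕ) (rs : List (Pre C)) (v : Val C),
    xs.Nodup → rs.length = xs.length → xs.map (updList v xs rs) = rs
  | [], rs, v, _, hlen => by
    have : rs = [] := List.length_eq_zero_iff.mp (by simpa using hlen)
    subst this; rfl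
  | y :: ys, [], _, _, hlen => by simp at hlen
  | y :: ys, r :: rs, v, hnd, hlen => by
    have hy : y ∉ ys := (List.nodup_cons.mp hnd).1
    simp only [List.map_cons, updList, Function.update_self, List.cons.injEq, true_and]
    have : ys.map (Function.update (updList v ys rs) y r) = ys.map (updList v ys rs) := by
      apply List.map_congr_left
      intro x hx
      exact Function.update_of_ne (fun h : x = y => hy (h ▸ hx)) _ _
    rw [this]
    exact map_updList ys rs v (List.nodup_cons.mp hnd).2 (by simpa using hlen)

lemma updList_map_self : ∀ (xs : List ℕ) (v : Val C) (f : ℕ → Pre C),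
    xs.Nodup → ∀ {x : ℕ}, x ∈ xs → updList v xs (xs.map f) x = f x
  | [], _, _, _, x, hx => by simp at hx
  | y :: ys, v, f, hnd, x, hx => by
    rcases List.mem_cons.mp hx with h | h
    · subst h; simp [updList]
    · have hxy : x ≠ y := fun hxy => (List.nodup_cons.mp hnd).1 (hxy ▸ h)
      simp only [List.map_cons, updList, Function.update_of_ne hxy]
      exact updList_map_self ys v f (List.nodup_cons.mp hnd).2 h

lemma updList_update_comm (r : Pre C) : ∀ (xs : List ℕ) (rs : List (Pre C)) (v : Val C) {x : ℕ},
    x ∉ xs → updList (Function.update v x r) xs rs = Function.update (updList v xs rs) x r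
  | [], rs, v, x, _ => by cases rs <;> rfl
  | y :: ys, [], v, x, _ => rfl
  | y :: ys, s :: ss, v, x, h => by
    have hxy : x ≠ y := fun hx => h (hx ▸ List.mem_cons_self)
    simp only [updList]
    rw [updList_update_comm r ys ss v (fun hx => h (List.mem_cons_of_mem _ hx))]
    exact Function.update_comm hxy _ _ _


mutual
theorem term_val_congr (v w : Val C) (t : Term C O)
    (h : ∀ x ∈ t.varList, v x = w x) : Term.val opFun v t = Term.val opFun w t := by
  cases t with
  | num n => rfl
  | sym c => rfl
  | inf => rfl
  | sup => rfl
  | var x =>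
    have := h x (by simp [Term.varList])
    simp [Term.val, this]
  | app f ts =>
    have hts : ∀ x ∈ Term.varListL ts, v x = w x := fun x hx => h x (by simpa [Term.varList] using hx)
    ext r
    simp only [Term.val, Set.mem_setOf_eq]
    exact exists_congr fun rs => and_congr_left' (term_vals_congr v w ts hts rs)
  | op o ts =>
    have hts : ∀ x ∈ Term.varListL ts, v x = w x := fun x hx => h x (by simpa [Term.varList] using hx)
    ext r
    simp only [Term.val, Set.mem_setOf_eq]
    exact exists_congr fun ks => and_congr_left' (term_vals_congr v w ts hts _)
  | interval t₁ t₂ =>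
    have h1 : ∀ x ∈ t₁.varList, v x = w x := fun x hx => h x (by simp [Term.varList, hx])
    have h2 : ∀ x ∈ t₂.varList, v x = w x := fun x hx => h x (by simp [Term.varList, hx])
    ext r
    simp only [Term.val, Set.mem_setOf_eq, term_val_congr v w t₁ h1,
      term_val_congr v w t₂ h2]

theorem term_vals_congr (v w : Val C) (ts : List (Term C O))
    (h : ∀ x ∈ Term.varListL ts, v x = w x) :
    ∀ rs : List (Pre C), Term.vals opFun v ts rs ↔ Term.vals opFun w ts rs := by
  cases ts with
  | nil => intro rs; rfl
  | cons t ts =>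
    intro rs
    have ht : ∀ x ∈ t.varList, v x = w x := fun x hx => h x (by simp [Term.varListL, hx])
    have hts : ∀ x ∈ Term.varListL ts, v x = w x := fun x hx => h x (by simp [Term.varListL, hx])
    simp only [Term.vals, term_val_congr v w t ht]
    exact exists_congr fun r => exists_congr fun rs' =>
      and_congr_right fun _ => and_congr_right fun _ => term_vals_congr v w ts hts rs'
end

mutual
theorem val_toTerm (v : Val C) (r : Pre C) :
    Term.val (O := O) opFun v (Pre.toTerm r) = {r} := by
  cases r with
  | inf => rfl
  | sup => rfl
  | num n => rfl
  | sym c => rfl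
  | app f rs =>
    ext q
    simp only [Pre.toTerm, Term.val, Set.mem_setOf_eq, Set.mem_singleton_iff]
    constructor
    · rintro ⟨qs, hqs, rfl⟩
      rw [(vals_toTermL v rs qs).mp hqs]
    · rintro rfl
      exact ⟨rs, (vals_toTermL v rs rs).mpr rfl, rfl⟩

theorem vals_toTermL (v : Val C) (rs : List (Pre C)) :
    ∀ qs : List (Pre C), Term.vals (O := O) opFun v (Pre.toTermL rs) qs ↔ qs = rs := by
  cases rs with
  | nil => intro qs; simp [Pre.toTermL, Term.vals]
  | cons r rs =>
    intro qs
    simp only [Pre.toTermL, Term.vals, val_toTerm v r, Set.mem_singleton_iff]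
    constructor
    · rintro ⟨a, as, rfl, rfl, has⟩
      rw [(vals_toTermL v rs as).mp has]
    · rintro rfl
      exact ⟨r, rs, rfl, rfl, (vals_toTermL v rs rs).mpr rfl⟩
end

lemma val_boundTerm (v : Val C) (b : ℕ ⊕ Pre C) :
    Term.val (O := O) opFun v (boundTerm b) = {boundVal v b} := by
  cases b with
  | inl x => rfl
  | inr r => simp [boundTerm, boundVal, val_toTerm]

lemma vals_iff (v : Val C) : ∀ (ts : List (Term C O)) (rs : List (Pre C)),
    Term.vals opFun v ts rs ↔
      rs.length = ts.length ∧ ∀ p ∈ rs.zip ts, p.1 ∈ Term.val opFun v p.2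
  | [], rs => by
    simp only [Term.vals, List.length_nil]
    constructor
    · rintro rfl; simp
    · rintro ⟨h, _⟩; exact List.length_eq_zero_iff.mp h
  | t :: ts, [] => by simp [Term.vals]
  | t :: ts, r :: rs => by
    simp only [Term.vals, List.length_cons, List.zip_cons_cons, List.forall_mem_cons]
    constructor
    · rintro ⟨a, as, heq, ha, has⟩
      obtain ⟨rfl, rfl⟩ : r = a ∧ rs = as := by simpa using heq
      have := (vals_iff v ts rs).mp has
      exact ⟨by omega, ha, this.2⟩
    · rintro ⟨hlen, h1, h2⟩
      exact ⟨r, rs, rfl, h1, (vals_iff v ts rs).mpr ⟨by omega, h2⟩⟩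

lemma vals_length {v : Val C} {ts : List (Term C O)} {rs : List (Pre C)}
    (h : Term.vals opFun v ts rs) : rs.length = ts.length :=
  ((vals_iff opFun v ts rs).mp h).1

lemma forall_zip_subst (u : Val C) :
    ∀ (ts : List (Term C O)) (zs : List ℕ) (qs : List (Pre C)),
    zs.length = ts.length → qs.length = ts.length →
    (∀ p ∈ zs.zip qs, u p.1 = p.2) →
    ((∀ p ∈ zs.zip ts, u p.1 ∈ Term.val opFun u p.2) ↔
     ∀ p ∈ qs.zip ts, p.1 ∈ Term.val opFun u p.2)
  | [], zs, qs, _, _, _ => by simp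
  | t :: ts, [], qs, hz, _, _ => by simp at hz
  | t :: ts, z :: zs, [], _, hq, _ => by simp at hq
  | t :: ts, z :: zs, q :: qs, hz, hq, hu => by
    simp only [List.zip_cons_cons, List.forall_mem_cons] at hu ⊢
    rw [hu.1]
    exact and_congr_right fun _ =>
      forall_zip_subst u ts zs qs (by simpa using hz) (by simpa using hq) hu.2


variable (I : Interp C)

lemma sat_negF (v : Val C) (F : AFml C O A) :
    AFml.sat opFun aggFun lt I v (AFml.negF F) ↔ ¬ AFml.sat opFun aggFun lt I v F := by
  simp [AFml.negF, AFml.sat]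

lemma sat_andF (v : Val C) (F G : AFml C O A) :
    AFml.sat opFun aggFun lt I v (AFml.andF F G) ↔
      AFml.sat opFun aggFun lt I v F ∧ AFml.sat opFun aggFun lt I v G := by
  simp only [AFml.andF, AFml.sat]
  tauto

lemma sat_exF (v : Val C) (x : ℕ) (F : AFml C O A) :
    AFml.sat opFun aggFun lt I v (AFml.exF x F) ↔
      ∃ r : Pre C, AFml.sat opFun aggFun lt I (Function.update v x r) F := by
  simp [AFml.exF, AFml.negF, AFml.sat]

lemma sat_andList (v : Val C) : ∀ (l : List (AFml C O A)),
    AFml.sat opFun aggFun lt I v (AFml.andList l) ↔ ∀ F ∈ l, AFml.sat opFun aggFun lt I v F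
  | [] => by simp [AFml.andList, AFml.topF, AFml.negF, AFml.sat]
  | F :: l => by
    have h : AFml.andList (F :: l) = AFml.andF F (AFml.andList l) := rfl
    rw [h, sat_andF opFun aggFun lt I v, sat_andList v l]
    simp [List.forall_mem_cons]

lemma sat_exList (F : AFml C O A) : ∀ (xs : List ℕ) (v : Val C), xs.Nodup →
    (AFml.sat opFun aggFun lt I v (AFml.exList xs F) ↔
      ∃ rs : List (Pre C), rs.length = xs.length ∧
        AFml.sat opFun aggFun lt I (updList v xs rs) F)
  | [], v, _ => by
    have h : AFml.exList [] F = F := rfl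
    rw [h]
    constructor
    · intro hs; exact ⟨[], rfl, hs⟩
    · rintro ⟨rs, _, hs⟩; exact hs
  | x :: xs, v, hnd => by
    have h : AFml.exList (x :: xs) F = AFml.exF x (AFml.exList xs F) := rfl
    rw [h, sat_exF opFun aggFun lt I]
    have hx : x ∉ xs := (List.nodup_cons.mp hnd).1
    constructor
    · rintro ⟨r, hr⟩
      obtain ⟨rs, hlen, hsat⟩ := (sat_exList F xs _ (List.nodup_cons.mp hnd).2).mp hr
      refine ⟨r :: rs, by simp [hlen], ?_⟩
      have he : updList v (x :: xs) (r :: rs) = Function.update (updList v xs rs) x r := rfl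
      rw [he, ← updList_update_comm r xs rs v hx]
      exact hsat
    · rintro ⟨rs, hlen, hsat⟩
      cases rs with
      | nil => simp at hlen
      | cons r rs =>
        refine ⟨r, (sat_exList F xs _ (List.nodup_cons.mp hnd).2).mpr
          ⟨rs, by simpa using hlen, ?_⟩⟩
        rw [updList_update_comm r xs rs v hx]
        exact hsat

lemma isat_top : IForm.sat (α := EGAtom C) I IForm.top := by
  simp [IForm.top, IForm.sat]

lemma isat_conjList (l : List (IForm (EGAtom C))) :
    IForm.sat I (IForm.conjList l) ↔ ∀ F ∈ l, IForm.sat I F := by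
  simp only [IForm.conjList, IForm.sat]
  constructor
  · intro h F hF
    obtain ⟨i, rfl⟩ := List.mem_iff_get.mp hF
    exact h i
  · intro h i
    exact h _ (List.get_mem _ _)

lemma tauLit_iff (v : Val C) (l : Lit C O) :
    IForm.sat I (tauLit opFun v l) ↔
      ∃ qs, Term.vals opFun v l.args qs ∧
        (if l.pos then (l.pred, qs) ∈ I else (l.pred, qs) ∉ I) := by
  unfold tauLit
  cases hp : l.pos <;>
    simp [hp, IForm.sat, IForm.neg, Subtype.exists]

lemma tauComp_iff (v : Val C) (c : Comp C O) :
    IForm.sat I (tauComp opFun lt v c) ↔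
      ∃ r₁ ∈ Term.val opFun v c.lhs, ∃ r₂ ∈ Term.val opFun v c.rhs,
        Rel.eval lt c.rel r₁ r₂ := by
  unfold tauComp
  split
  · next h => exact iff_of_true (isat_top I) h
  · next h => exact iff_of_false (fun hs => hs) h


lemma tauLit_congr (v w : Val C) (l : Lit C O) (h : ∀ x ∈ l.varList, v x = w x) :
    tauLit (C := C) opFun v l = tauLit opFun w l := by
  have hv : Term.vals opFun v l.args = Term.vals opFun w l.args :=
    funext fun rs => propext (term_vals_congr opFun v w l.args h rs)
  unfold tauLit
  rw [hv]

lemma tauComp_congr (v w : Val C) (c : Comp C O) (h : ∀ x ∈ c.varList, v x = w x) :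
    tauComp (C := C) opFun lt v c = tauComp opFun lt w c := by
  have h1 : Term.val opFun v c.lhs = Term.val opFun w c.lhs :=
    term_val_congr opFun v w c.lhs (fun x hx => h x (by simp [Comp.varList, hx]))
  have h2 : Term.val opFun v c.rhs = Term.val opFun w c.rhs :=
    term_val_congr opFun v w c.rhs (fun x hx => h x (by simp [Comp.varList, hx]))
  unfold tauComp
  rw [h1, h2]

lemma tauCondElem_congr (v w : Val C) (ce : CondElem C O)
    (h : ∀ x ∈ ce.varList, v x = w x) :
    tauCondElem opFun lt v ce = tauCondElem opFun lt w ce := by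
  cases ce with
  | inl l => exact tauLit_congr opFun v w l h
  | inr c => exact tauComp_congr opFun lt v w c h

lemma tauCond_congr (v w : Val C) (cond : List (CondElem C O))
    (h : ∀ ce ∈ cond, ∀ x ∈ CondElem.varList ce, v x = w x) :
    tauCond opFun lt v cond = tauCond opFun lt w cond := by
  unfold tauCond
  rw [List.map_congr_left fun ce hce => tauCondElem_congr opFun lt v w ce (h ce hce)]

lemma evalL_map_var (v : Val C) : ∀ ws : List ℕ,
    AArg.evalL (O := O) (A := A) opFun aggFun lt I v (ws.map AArg.var) = ws.map v
  | [] => rfl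
  | w :: ws => by
    simp only [List.map_cons, AArg.evalL, AArg.eval, List.cons.injEq, true_and]
    exact evalL_map_var v ws


lemma forall_congr_mem {α : Type} {l : List α} {P Q : α → Prop}
    (h : ∀ a ∈ l, (P a ↔ Q a)) : (∀ a ∈ l, P a) ↔ ∀ a ∈ l, Q a :=
  ⟨fun hp a ha => (h a ha).mp (hp a ha), fun hq a ha => (h a ha).mpr (hq a ha)⟩

lemma mem_varListL {t : Term C O} : ∀ {ts : List (Term C O)}, t ∈ ts →
    ∀ {x : ℕ}, x ∈ t.varList → x ∈ Term.varListL ts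
  | [], h, _, _ => absurd h List.not_mem_nil
  | t' :: ts, h, x, hx => by
    simp only [Term.varListL, List.mem_append]
    rcases List.mem_cons.mp h with rfl | h
    · exact Or.inl hx
    · exact Or.inr (mem_varListL h hx)

lemma phiLit_iff (v : Val C) (l : Lit C O) :
    AFml.sat opFun aggFun lt I v (phiLit l) ↔ IForm.sat I (tauLit opFun v l) := by
  rw [tauLit_iff opFun I v l]
  set n := freshVar l.varList with hn
  set ws := (List.range l.args.length).map (· + n) with hws
  have hwsnd : ws.Nodup := List.Nodup.map (fun a b h => by omega) List.nodup_range
  have hwslen : ws.length = l.args.length := by simp [hws]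
  have hfresh : ∀ x ∈ l.varList, x ∉ ws := by
    intro x hx hmem
    have hxn : x < n := lt_freshVar hx
    obtain ⟨i, _, rfl⟩ := List.mem_map.mp hmem
    omega
  have heq : (phiLit l : AFml C O A) = AFml.exList ws (AFml.andF
      (AFml.andList ((ws.zip l.args).map (fun q => AFml.mem (AArg.var q.1) q.2)))
      (if l.pos then AFml.atom l.pred (ws.map AArg.var)
       else AFml.negF (AFml.atom l.pred (ws.map AArg.var)))) := rfl
  rw [heq, sat_exList opFun aggFun lt I _ ws v hwsnd]
  have key : ∀ qs : List (Pre C), qs.length = ws.length →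
      (AFml.sat opFun aggFun lt I (updList v ws qs) (AFml.andF
        (AFml.andList ((ws.zip l.args).map (fun q => AFml.mem (AArg.var q.1) q.2)))
        (if l.pos then AFml.atom l.pred (ws.map AArg.var)
         else AFml.negF (AFml.atom l.pred (ws.map AArg.var)))) ↔
      (Term.vals opFun v l.args qs ∧
        (if l.pos then (l.pred, qs) ∈ I else (l.pred, qs) ∉ I))) := by
    intro qs hlen
    set u := updList v ws qs with hu
    have huv : ∀ x ∈ Term.varListL l.args, u x = v x := fun x hx =>
      updList_not_mem ws qs v (hfresh x hx)
    rw [sat_andF opFun aggFun lt I, sat_andList opFun aggFun lt I]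
    have hmems : (∀ F ∈ (ws.zip l.args).map (fun q => AFml.mem (AArg.var q.1) q.2),
        AFml.sat opFun aggFun lt I u F) ↔ Term.vals opFun v l.args qs := by
      rw [List.forall_mem_map]
      have hsatmem : ∀ p ∈ ws.zip l.args,
          (AFml.sat opFun aggFun lt I u (AFml.mem (AArg.var p.1) p.2) ↔
            u p.1 ∈ Term.val opFun u p.2) := by
        intro p hp
        simp [AFml.sat, AArg.eval]
      rw [forall_congr_mem hsatmem]
      rw [forall_zip_subst opFun u l.args ws qs (by omega) (by omega)
        (updList_zip ws qs v hwsnd hlen)]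
      have hval : ∀ p ∈ qs.zip l.args,
          (p.1 ∈ Term.val opFun u p.2 ↔ p.1 ∈ Term.val opFun v p.2) := by
        intro p hp
        rw [term_val_congr opFun u v p.2
          (fun x hx => huv x (mem_varListL (List.of_mem_zip hp).2 hx))]
      rw [forall_congr_mem hval, vals_iff opFun v l.args qs]
      simp only [iff_and_self]
      intro _; omega
    rw [hmems]
    have hmap : AArg.evalL opFun aggFun lt I u (ws.map AArg.var) = qs := by
      rw [evalL_map_var opFun aggFun lt I u ws]
      exact map_updList ws qs v hwsnd hlen
    cases l.pos <;> simp [AFml.sat, AFml.negF, hmap]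
  constructor
  · rintro ⟨qs, hlen, hsat⟩
    obtain ⟨h1, h2⟩ := (key qs hlen).mp hsat
    exact ⟨qs, h1, h2⟩
  · rintro ⟨qs, h1, h2⟩
    have hlen : qs.length = ws.length := by
      rw [hwslen]; exact vals_length opFun h1
    exact ⟨qs, hlen, (key qs hlen).mpr ⟨h1, h2⟩⟩


lemma phiComp_iff (v : Val C) (c : Comp C O) :
    AFml.sat opFun aggFun lt I v (phiComp c) ↔ IForm.sat I (tauComp opFun lt v c) := by
  rw [tauComp_iff opFun lt I v c]
  set n := freshVar c.varList with hn
  have hl : ∀ x ∈ c.lhs.varList, x < n := fun x hx =>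
    lt_freshVar (by simp [Comp.varList, hx])
  have hr : ∀ x ∈ c.rhs.varList, x < n := fun x hx =>
    lt_freshVar (by simp [Comp.varList, hx])
  have heq : (phiComp c : AFml C O A) = AFml.exF n (AFml.exF (n + 1)
      (AFml.andF (AFml.mem (AArg.var n) c.lhs)
        (AFml.andF (AFml.mem (AArg.var (n + 1)) c.rhs)
          (AFml.cmp c.rel (AArg.var n) (AArg.var (n + 1)))))) := rfl
  rw [heq, sat_exF opFun aggFun lt I]
  constructor
  · rintro ⟨r₁, h1⟩
    rw [sat_exF opFun aggFun lt I] at h1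
    obtain ⟨r₂, h2⟩ := h1
    rw [sat_andF opFun aggFun lt I, sat_andF opFun aggFun lt I] at h2
    obtain ⟨hm1, hm2, hcmp⟩ := h2
    set u := Function.update (Function.update v n r₁) (n + 1) r₂ with hu
    have hun : u n = r₁ := by
      rw [hu, Function.update_of_ne (by omega), Function.update_self]
    have hun1 : u (n + 1) = r₂ := by rw [hu, Function.update_self]
    have huv : ∀ x, x < n → u x = v x := by
      intro x hx
      rw [hu, Function.update_of_ne (by omega), Function.update_of_ne (by omega)]
    simp only [AFml.sat, AArg.eval] at hm1 hm2 hcmp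
    rw [hun, term_val_congr opFun u v c.lhs (fun x hx => huv x (hl x hx))] at hm1
    rw [hun1, term_val_congr opFun u v c.rhs (fun x hx => huv x (hr x hx))] at hm2
    rw [hun, hun1] at hcmp
    exact ⟨r₁, hm1, r₂, hm2, hcmp⟩
  · rintro ⟨r₁, hm1, r₂, hm2, hcmp⟩
    refine ⟨r₁, ?_⟩
    rw [sat_exF opFun aggFun lt I]
    refine ⟨r₂, ?_⟩
    rw [sat_andF opFun aggFun lt I, sat_andF opFun aggFun lt I]
    set u := Function.update (Function.update v n r₁) (n + 1) r₂ with hu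
    have hun : u n = r₁ := by
      rw [hu, Function.update_of_ne (by omega), Function.update_self]
    have hun1 : u (n + 1) = r₂ := by rw [hu, Function.update_self]
    have huv : ∀ x, x < n → u x = v x := by
      intro x hx
      rw [hu, Function.update_of_ne (by omega), Function.update_of_ne (by omega)]
    refine ⟨?_, ?_, ?_⟩ <;> simp only [AFml.sat, AArg.eval]
    · rw [hun, term_val_congr opFun u v c.lhs (fun x hx => huv x (hl x hx))]
      exact hm1
    · rw [hun1, term_val_congr opFun u v c.rhs (fun x hx => huv x (hr x hx))]
      exact hm2
    · rw [hun, hun1]; exact hcmp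

lemma phiCondElem_iff (v : Val C) (ce : CondElem C O) :
    AFml.sat opFun aggFun lt I v (phiCondElem ce) ↔
      IForm.sat I (tauCondElem opFun lt v ce) := by
  cases ce with
  | inl l => exact phiLit_iff opFun aggFun lt I v l
  | inr c => exact phiComp_iff opFun aggFun lt I v c

lemma phiCond_iff (v : Val C) (cond : List (CondElem C O)) :
    AFml.sat opFun aggFun lt I v (phiCond cond) ↔
      IForm.sat I (tauCond opFun lt v cond) := by
  unfold phiCond tauCond
  rw [sat_andList opFun aggFun lt I, isat_conjList I, List.forall_mem_map,
    List.forall_mem_map]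
  exact forall_congr_mem fun ce hce => phiCondElem_iff opFun aggFun lt I v ce


lemma sat_cmp (v : Val C) (rel : Rel) (a₁ a₂ : AArg C O A) :
    AFml.sat opFun aggFun lt I v (.cmp rel a₁ a₂) ↔
      Rel.eval lt rel (AArg.eval opFun aggFun lt I v a₁)
        (AArg.eval opFun aggFun lt I v a₂) := by
  simp [AFml.sat]

lemma sat_mem (v : Val C) (a : AArg C O A) (t : Term C O) :
    AFml.sat opFun aggFun lt I v (.mem a t) ↔
      AArg.eval opFun aggFun lt I v a ∈ Term.val opFun v t := by
  simp [AFml.sat]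

lemma eval_var (v : Val C) (x : ℕ) :
    AArg.eval (O := O) (A := A) opFun aggFun lt I v (.var x) = v x := by
  simp [AArg.eval]

lemma eval_agg (v : Val C) (a : A) (zs : List ℕ) (F : AFml C O A) :
    AArg.eval opFun aggFun lt I v (.agg a zs F) =
      aggFun a {rs : List (Pre C) | rs.length = zs.length ∧
        AFml.sat opFun aggFun lt I (updList v zs rs) F} := by
  simp [AArg.eval]

lemma sat_tauAgg_iff (v : Val C) (xs : List ℕ) (E : AggExpr C O A) :
    IForm.sat I (tauAgg opFun aggFun lt v xs E) ↔
      Justifies opFun aggFun lt v xs E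
        {rs | IForm.sat I (tauCond opFun lt (updList v xs rs.val) E.cond)} := by
  unfold tauAgg
  constructor
  · intro h
    by_contra hnj
    obtain ⟨⟨rs, hrs⟩, hsat⟩ := h ⟨_, hnj⟩ (fun j => j.2)
    exact hrs hsat
  · intro hj Δ hall
    by_contra hne
    have hsub : Δ.val =
        {rs | IForm.sat I (tauCond opFun lt (updList v xs rs.val) E.cond)} := by
      ext rs
      constructor
      · intro h1
        exact hall ⟨rs, h1⟩
      · intro h1
        by_contra h2
        exact hne ⟨⟨rs, h2⟩, h1⟩
    exact Δ.2 (hsub ▸ hj)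


lemma phiAgg_iff (v : Val C) (loc : List ℕ) (hloc : loc.Nodup) (E : AggExpr C O A) :
    AFml.sat opFun aggFun lt I v (phiAgg loc E) ↔
      IForm.sat I (tauAgg opFun aggFun lt v (E.varList.dedup.filter (· ∈ loc)) E) := by
  rw [sat_tauAgg_iff opFun aggFun lt I]
  set xs := E.varList.dedup.filter (· ∈ loc) with hxs
  have hxsnd : xs.Nodup := (E.varList.nodup_dedup).filter _
  have hxs_mem : ∀ x : ℕ, x ∈ xs ↔ (x ∈ E.varList ∧ x ∈ loc) := by
    intro x
    simp [hxs, List.mem_filter, List.mem_dedup]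
  set n := freshVar (loc ++ E.varList) with hn
  have hfrloc : ∀ x ∈ loc, x < n := fun x hx => lt_freshVar (by simp [hx])
  have hfrE : ∀ x ∈ E.varList, x < n := fun x hx => lt_freshVar (by simp [hx])
  set zs := (List.range E.ts.length).map (· + (n + 1)) with hzs
  have hzsnd : zs.Nodup := List.Nodup.map (fun a b h => by omega) List.nodup_range
  have hzslen : zs.length = E.ts.length := by simp [hzs]
  have hzgt : ∀ z ∈ zs, n < z := by
    intro z hz
    obtain ⟨i, _, rfl⟩ := List.mem_map.mp hz
    omega
  have hEzs : ∀ x ∈ E.varList, x ∉ zs := fun x hx hmem => by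
    have := hfrE x hx; have := hzgt x hmem; omega
  have hlzs : ∀ x ∈ loc, x ∉ zs := fun x hx hmem => by
    have := hfrloc x hx; have := hzgt x hmem; omega
  have hzloc : ∀ z ∈ zs, z ∉ loc := fun z hz hmem => by
    have := hfrloc z hmem; have := hzgt z hz; omega
  have htsE : ∀ x ∈ Term.varListL E.ts, x ∈ E.varList := by
    intro x hx
    simp only [AggExpr.varList, AggExpr.lhsVarList, List.mem_append]
    exact Or.inl (Or.inl hx)
  have hcondE : ∀ ce ∈ E.cond, ∀ x ∈ CondElem.varList ce, x ∈ E.varList := by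
    intro ce hce x hx
    simp only [AggExpr.varList, AggExpr.lhsVarList, List.mem_append, List.mem_flatMap]
    exact Or.inl (Or.inr ⟨ce, hce, hx⟩)
  have hboundE : ∀ x ∈ boundVarList E.bound, x ∈ E.varList := by
    intro x hx
    simp only [AggExpr.varList, List.mem_append]
    exact Or.inr hx
  set G : AFml C O A := AFml.exList loc (AFml.andF
      (AFml.andList ((zs.zip E.ts).map (fun q => AFml.mem (AArg.var q.1) q.2)))
      (phiCond E.cond)) with hG
  have heq : (phiAgg loc E : AFml C O A) = AFml.exF n (AFml.andF
      (AFml.cmp E.rel (AArg.agg E.name zs G) (AArg.var n))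
      (AFml.mem (AArg.var n) (boundTerm E.bound))) := rfl
  rw [heq, sat_exF opFun aggFun lt I]
  -- the aggregate set is independent of r and equals the tau-side set
  have hset : ∀ r : Pre C,
      {qs : List (Pre C) | qs.length = zs.length ∧
        AFml.sat opFun aggFun lt I (updList (Function.update v n r) zs qs) G} =
      {q | ∃ rs ∈ {rs : AggTuple C xs |
          IForm.sat I (tauCond opFun lt (updList v xs rs.val) E.cond)},
        Term.vals opFun (updList v xs rs.val) E.ts q} := by
    intro r
    ext qs
    simp only [Set.mem_setOf_eq]
    constructor
    · rintro ⟨hlen, hsat⟩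
      rw [hG, sat_exList opFun aggFun lt I _ loc _ hloc] at hsat
      obtain ⟨ss, hsslen, hsat⟩ := hsat
      set u := updList (updList (Function.update v n r) zs qs) loc ss with hu
      rw [sat_andF opFun aggFun lt I] at hsat
      obtain ⟨hmem, hcond⟩ := hsat
      have huE : ∀ x ∈ E.varList, x ∉ loc → u x = v x := by
        intro x hxE hxl
        rw [hu, updList_not_mem loc ss _ hxl, updList_not_mem zs qs _ (hEzs x hxE),
          Function.update_of_ne (by have := hfrE x hxE; omega)]
      have huz : ∀ p ∈ zs.zip qs, u p.1 = p.2 := by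
        intro p hp
        have hz : p.1 ∈ zs := (List.of_mem_zip hp).1
        rw [hu, updList_not_mem loc ss _ (hzloc p.1 hz)]
        exact updList_zip zs qs _ hzsnd hlen p hp
      set w := updList v xs (xs.map u) with hw
      have hwu : ∀ x ∈ E.varList, w x = u x := by
        intro x hxE
        by_cases hxl : x ∈ loc
        · exact updList_map_self xs v u hxsnd ((hxs_mem x).mpr ⟨hxE, hxl⟩)
        · rw [hw, updList_not_mem xs _ _ (fun hmem => hxl ((hxs_mem x).mp hmem).2)]
          exact (huE x hxE hxl).symm
      refine ⟨⟨xs.map u, by simp⟩, ?_, ?_⟩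
      · show IForm.sat I (tauCond opFun lt (updList v xs (xs.map u)) E.cond)
        rw [← hw, tauCond_congr opFun lt w u E.cond
          (fun ce hce x hx => hwu x (hcondE ce hce x hx))]
        exact (phiCond_iff opFun aggFun lt I u E.cond).mp hcond
      · show Term.vals opFun (updList v xs (xs.map u)) E.ts qs
        rw [← hw, term_vals_congr opFun w u E.ts (fun x hx => hwu x (htsE x hx))]
        rw [sat_andList opFun aggFun lt I, List.forall_mem_map] at hmem
        have hmem' : ∀ p ∈ zs.zip E.ts, u p.1 ∈ Term.val opFun u p.2 := by
          intro p hp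
          have := hmem p hp
          rwa [sat_mem opFun aggFun lt I, eval_var opFun aggFun lt I] at this
        rw [forall_zip_subst opFun u E.ts zs qs (by omega) (by omega) huz] at hmem'
        exact (vals_iff opFun u E.ts qs).mpr ⟨by omega, hmem'⟩
    · rintro ⟨rs, hrscond, hrsvals⟩
      set f := updList v xs rs.val with hf
      have hq : qs.length = E.ts.length := vals_length opFun hrsvals
      set ss := loc.map f with hss
      set u := updList (updList (Function.update v n r) zs qs) loc ss with hu
      have huE : ∀ x ∈ E.varList, x ∉ loc → u x = v x := by
        intro x hxE hxl
        rw [hu, updList_not_mem loc ss _ hxl, updList_not_mem zs qs _ (hEzs x hxE),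
          Function.update_of_ne (by have := hfrE x hxE; omega)]
      have huz : ∀ p ∈ zs.zip qs, u p.1 = p.2 := by
        intro p hp
        have hz : p.1 ∈ zs := (List.of_mem_zip hp).1
        rw [hu, updList_not_mem loc ss _ (hzloc p.1 hz)]
        exact updList_zip zs qs _ hzsnd (by omega) p hp
      have huf : ∀ x ∈ E.varList, u x = f x := by
        intro x hxE
        by_cases hxl : x ∈ loc
        · rw [hu, hss]
          exact updList_map_self loc _ f hloc hxl
        · rw [huE x hxE hxl, hf,
            updList_not_mem xs rs.val _ (fun hmem => hxl ((hxs_mem x).mp hmem).2)]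
      refine ⟨by omega, ?_⟩
      rw [hG, sat_exList opFun aggFun lt I _ loc _ hloc]
      refine ⟨ss, by simp [hss], ?_⟩
      rw [sat_andF opFun aggFun lt I]
      constructor
      · rw [sat_andList opFun aggFun lt I, List.forall_mem_map]
        have hvals : Term.vals opFun u E.ts qs := by
          rw [term_vals_congr opFun u f E.ts (fun x hx => huf x (htsE x hx))]
          exact hrsvals
        have hmem' : ∀ p ∈ qs.zip E.ts, p.1 ∈ Term.val opFun u p.2 :=
          ((vals_iff opFun u E.ts qs).mp hvals).2
        rw [← forall_zip_subst opFun u E.ts zs qs (by omega) (by omega) huz] at hmem'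
        intro p hp
        rw [sat_mem opFun aggFun lt I, eval_var opFun aggFun lt I]
        exact hmem' p hp
      · rw [phiCond_iff opFun aggFun lt I,
          tauCond_congr opFun lt u f E.cond (fun ce hce x hx => huf x (hcondE ce hce x hx))]
        exact hrscond
  -- now the outer equivalence
  have hb : ∀ r : Pre C, boundVal (Function.update v n r) E.bound = boundVal v E.bound := by
    intro r
    cases hbnd : E.bound with
    | inl x =>
      have hxE : x ∈ E.varList := hboundE x (by simp [hbnd, boundVarList])
      simp only [boundVal]
      exact Function.update_of_ne (by have := hfrE x hxE; omega) _ _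
    | inr q => rfl
  unfold Justifies
  constructor
  · rintro ⟨r, hr⟩
    rw [sat_andF opFun aggFun lt I] at hr
    obtain ⟨hcmp, hmem⟩ := hr
    rw [sat_cmp opFun aggFun lt I, eval_agg opFun aggFun lt I,
      eval_var opFun aggFun lt I, Function.update_self, hset r] at hcmp
    rw [sat_mem opFun aggFun lt I, eval_var opFun aggFun lt I, Function.update_self,
      val_boundTerm opFun, hb r, Set.mem_singleton_iff] at hmem
    rwa [hmem] at hcmp
  · intro hj
    refine ⟨boundVal v E.bound, ?_⟩
    rw [sat_andF opFun aggFun lt I]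
    constructor
    · rw [sat_cmp opFun aggFun lt I, eval_agg opFun aggFun lt I,
        eval_var opFun aggFun lt I, Function.update_self, hset _]
      exact hj
    · rw [sat_mem opFun aggFun lt I, eval_var opFun aggFun lt I, Function.update_self,
        val_boundTerm opFun, hb _]
      rfl


lemma localList_nodup (R : Rule C O A) : R.localList.Nodup :=
  (List.nodup_dedup _).filter _

lemma phiBElem_iff (v : Val C) (loc : List ℕ) (hloc : loc.Nodup) (e : BElem C O A) :
    AFml.sat opFun aggFun lt I v (phiBElem loc e) ↔
      IForm.sat I (tauBElem opFun aggFun lt v loc e) := by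
  cases e with
  | lit l => exact phiLit_iff opFun aggFun lt I v l
  | comp c => exact phiComp_iff opFun aggFun lt I v c
  | agg E => exact phiAgg_iff opFun aggFun lt I v loc hloc E

lemma phiBody_iff (v : Val C) (loc : List ℕ) (hloc : loc.Nodup) (b : List (BElem C O A)) :
    AFml.sat opFun aggFun lt I v (phiBody loc b) ↔
      IForm.sat I (tauBody opFun aggFun lt v loc b) := by
  unfold phiBody tauBody
  rw [sat_andList opFun aggFun lt I, isat_conjList I, List.forall_mem_map,
    List.forall_mem_map]
  exact forall_congr_mem fun e he => phiBElem_iff opFun aggFun lt I v loc hloc e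

end Lemma6Aux

/-- Lemma 6: for any EG program `Γ`, the infinitary formula
`τ₂Γ` is satisfied by the same interpretations of the vocabulary of `Γ` as
the conjunction of the universal closures of the formula representations of
the constraints of `Γ`. -/
theorem lemma_6 {C O A : Type}
    (opFun : O → List ℤ → Option ℤ)
    (aggFun : A → Set (List (Pre C)) → Pre C)
    (lt : Pre C → Pre C → Prop) (hlt : PreOrderOK lt)
    (Γ : Set (Rule C O A)) (I : Interp C) (hI : I ⊆ vocab Γ) :
    IForm.sat I (tau2 opFun aggFun lt Γ) ↔
      ∀ R ∈ Γ, R.head = Head.empty →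
        ∀ v : Val C, AFml.sat opFun aggFun lt I v (phiConstraintRep R) := by
  unfold tau2
  constructor
  · intro h R hR hE v
    have h1 := h ⟨⟨R, ⟨hR, hE⟩⟩, v⟩
    unfold phiConstraintRep
    rw [sat_negF opFun aggFun lt I,
      phiBody_iff opFun aggFun lt I v R.localList (localList_nodup R) R.body]
    exact h1
  · intro h z
    obtain ⟨⟨R, hR, hE⟩, v⟩ := z
    have h1 := h R hR hE v
    unfold phiConstraintRep at h1
    rw [sat_negF opFun aggFun lt I,
      phiBody_iff opFun aggFun lt I v _ (localList_nodup R) _] at h1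
    exact h1

end EG
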